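/- Let G = Γ((Z/2Z)^n, S) be a Cayley graph whose generating set S is a Sidon set (all pairwise sums of distinct elements of S are distinct). Then any two distinct vertices of G that have a common neighbor have exactly two common neighbors. -/

import Mathlib

open scoped Classical

def cayley (n : ℕ) (S : Set (Fin n → ZMod 2)) : SimpleGraph (Fin n → ZMod 2) where
  Adj x y := x ≠ y ∧ x + y ∈ S
  symm := by
    constructor
    intro x y h
    exact ⟨h.1.symm, by rw [add_comm]; exact h.2⟩
  loopless := by
    constructor
    intro x h
    exact h.1 rfl

lemma addself (n : ℕ) (a : Fin n → ZMod 2) : a + a = 0 := by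
  funext i
  simp only [Pi.add_apply, Pi.zero_apply]
  exact ZMod.natCast_self 2 ▸ (by decide : ∀ b : ZMod 2, b + b = 0) (a i)

theorem stmt10 (n : ℕ) (S : Set (Fin n → ZMod 2)) (h0 : (0 : Fin n → ZMod 2) ∉ S)
    (hSidon : ∀ s₁ ∈ S, ∀ s₂ ∈ S, ∀ s₃ ∈ S, ∀ s₄ ∈ S,
      s₁ ≠ s₂ → s₃ ≠ s₄ → s₁ + s₂ = s₃ + s₄ →
      ({s₁, s₂} : Set (Fin n → ZMod 2)) = {s₃, s₄})
    (x y : Fin n → ZMod 2) (hxy : x ≠ y)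
    (hcommon : ∃ z, (cayley n S).Adj x z ∧ (cayley n S).Adj y z) :
    Set.ncard {z | (cayley n S).Adj x z ∧ (cayley n S).Adj y z} = 2 := by
  obtain ⟨z, ⟨hxz, hxzS⟩, ⟨hyz, hyzS⟩⟩ := hcommon
  have key : ∀ a b : Fin n → ZMod 2, a + b = 0 → a = b := by
    intro a b h
    have := congrArg (· + b) h
    simpa [add_assoc, addself n b] using this
  -- z' = x + y + z is the other common neighbor
  set z' := x + y + z with hz'
  have hzz' : z ≠ z' := by
    intro h
    apply hxy
    apply key
    have := congrArg (· + z) h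
    simp only [hz'] at this
    calc x + y = x + y + (z + z) := by rw [addself n z, add_zero]
    _ = (x + y + z) + z := by ring
    _ = z + z := by rw [← this]
    _ = 0 := addself n z
  have hxz' : x + z' = y + z := by
    simp only [hz']
    calc x + (x + y + z) = (x + x) + (y + z) := by ring
    _ = y + z := by rw [addself n x, zero_add]
  have hyz' : y + z' = x + z := by
    simp only [hz']
    calc y + (x + y + z) = (y + y) + (x + z) := by ring
    _ = x + z := by rw [addself n y, zero_add]
  have hset : {w | (cayley n S).Adj x w ∧ (cayley n S).Adj y w} = {z, z'} := by
    ext w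
    simp only [Set.mem_setOf_eq, Set.mem_insert_iff, Set.mem_singleton_iff]
    constructor
    · rintro ⟨⟨hxw, hxwS⟩, ⟨hyw, hywS⟩⟩
      have hsum : (x + w) + (y + w) = (x + z) + (y + z) := by
        have h1 : (x + w) + (y + w) = x + y := by
          calc (x + w) + (y + w) = (x + y) + (w + w) := by ring
          _ = x + y := by rw [addself n w, add_zero]
        have h2 : (x + z) + (y + z) = x + y := by
          calc (x + z) + (y + z) = (x + y) + (z + z) := by ring
          _ = x + y := by rw [addself n z, add_zero]
        rw [h1, h2]
      have hne1 : x + w ≠ y + w := by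
        intro h
        apply hxy
        apply key
        calc x + y = (x + w) + (y + w) := by
              rw [show (x+w)+(y+w) = (x+y)+(w+w) by ring, addself n w, add_zero]
        _ = (y + w) + (y + w) := by rw [h]
        _ = 0 := addself n _
      have hne2 : x + z ≠ y + z := by
        intro h
        apply hxy
        apply key
        calc x + y = (x + z) + (y + z) := by
              rw [show (x+z)+(y+z) = (x+y)+(z+z) by ring, addself n z, add_zero]
        _ = (y + z) + (y + z) := by rw [h]
        _ = 0 := addself n _
      have := hSidon _ hxwS _ hywS _ hxzS _ hyzS hne1 hne2 hsum
      have hmem : x + w ∈ ({x + z, y + z} : Set (Fin n → ZMod 2)) := by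
        rw [← this]; left; rfl
      rcases hmem with h | h
      · left
        apply key
        calc w + z = (x + (x + w)) + z := by
              rw [show x + (x+w) = (x+x)+w by ring, addself n x, zero_add]
        _ = (x + (x + z)) + z := by rw [h]
        _ = z + z := by rw [show x + (x+z) = (x+x)+z by ring, addself n x, zero_add]
        _ = 0 := addself n z
      · right
        apply key
        have hw : w = y + z + x := by
          have := congrArg (x + ·) h
          simpa [show x + (x + w) = (x+x)+w by ring, addself n x,
            show (x : Fin n → ZMod 2) + (y + z) = y + z + x by ring] using
            (by
              calc w = x + (x + w) := by rw [show x+(x+w) = (x+x)+w by ring, addself n x, zero_add]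
              _ = x + (y + z) := by rw [h]
              _ = y + z + x := by ring)
        rw [hw, hz']
        calc y + z + x + (x + y + z) = (x+x)+(y+y)+(z+z) := by ring
        _ = 0 := by rw [addself n x, addself n y, addself n z]; simp
    · rintro (rfl | rfl)
      · exact ⟨⟨hxz, hxzS⟩, ⟨hyz, hyzS⟩⟩
      · refine ⟨⟨?_, hxz' ▸ hyzS⟩, ⟨?_, hyz' ▸ hxzS⟩⟩
        · intro h
          apply hyz
          apply key
          rw [← hxz', ← h]
          exact addself n _
        · intro h
          apply hxz
          apply key
          rw [← hyz', ← h]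
          exact addself n _
  rw [hset]
  exact Set.ncard_pair hzz'
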